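/- arXiv:2508.05033 — 2 statements merged into one kernel-verified Lean document; each statement's English description precedes it below -/
import Mathlib

section
/- For every real x and every local point xⁱ, the function h admits the concave second-order lower bound h(x) ≥ h(xⁱ) + h′(xⁱ)·(x − xⁱ) − (ε/2)·(x − xⁱ)², where h′(xⁱ) = Σ_{a=1}^{L−1} Σ_{b=a+1}^{L} (−(4π·P_t·|Y_{ab}|·ϑ_{ab})/λ)·sin((2π/λ)·xⁱ·ϑ_{ab} + arg Y_{ab}) and ε = Σ_{a=1}^{L−1} Σ_{b=a+1}^{L} (8π²·P_t·|Y_{ab}|·ϑ_{ab}²)/λ². -/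
open Real Complex Finset

lemma cos_taylor_lb (z t : ℝ) :
    Real.cos z - Real.sin z * t - t ^ 2 / 2 ≤ Real.cos (z + t) := by
  set g : ℝ → ℝ := fun s => Real.cos (z + s) - Real.cos z + Real.sin z * s + s ^ 2 / 2 with hg
  have hg0 : g 0 = 0 := by simp [hg]
  have hderiv : ∀ s : ℝ, HasDerivAt g (-Real.sin (z + s) + Real.sin z + s) s := by
    intro s
    have h1 : HasDerivAt (fun u : ℝ => Real.cos (z + u)) (-Real.sin (z + s)) s := by
      have := (Real.hasDerivAt_cos (z + s)).comp s ((hasDerivAt_id s).const_add z)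
      simpa [Function.comp_def] using this
    have h2 : HasDerivAt (fun u : ℝ => Real.sin z * u) (Real.sin z) s := by
      simpa using (hasDerivAt_id s).const_mul (Real.sin z)
    have h3 : HasDerivAt (fun u : ℝ => u ^ 2 / 2) s s := by
      have := (hasDerivAt_pow 2 s).div_const 2
      simpa using this
    exact ((h1.sub_const (Real.cos z)).add h2).add h3
  have hlip : ∀ s : ℝ, |Real.sin (z + s) - Real.sin z| ≤ |s| := by
    intro s
    rw [Real.sin_sub_sin]
    have h1 : |Real.sin (s / 2)| ≤ |s / 2| := Real.abs_sin_le_abs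
    have h2 : |Real.cos ((z + s + z) / 2)| ≤ 1 := Real.abs_cos_le_one _
    calc |2 * Real.sin ((z + s - z) / 2) * Real.cos ((z + s + z) / 2)|
        = 2 * |Real.sin ((z + s - z) / 2)| * |Real.cos ((z + s + z) / 2)| := by
          rw [abs_mul, abs_mul]; norm_num
      _ ≤ 2 * |s / 2| * 1 := by
          apply mul_le_mul _ h2 (abs_nonneg _) (by positivity)
          have : z + s - z = s := by ring
          rw [this]
          nlinarith [abs_nonneg (Real.sin (s/2))]
      _ = |s| := by rw [abs_div]; simp; ring
  have hcont : Continuous g := by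
    rw [hg]; fun_prop
  have hdg : ∀ s : ℝ, deriv g s = -Real.sin (z + s) + Real.sin z + s := fun s =>
    (hderiv s).deriv
  suffices hs : 0 ≤ g t by
    have : g t = Real.cos (z + t) - Real.cos z + Real.sin z * t + t ^ 2 / 2 := rfl
    linarith [this ▸ hs]
  rcases le_or_gt 0 t with ht | ht
  · have hmono : MonotoneOn g (Set.Ici 0) := by
      apply monotoneOn_of_deriv_nonneg (convex_Ici 0) hcont.continuousOn
      · exact fun s _ => (hderiv s).differentiableAt.differentiableWithinAt
      · intro s hs
        rw [interior_Ici] at hs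
        rw [hdg]
        have := (abs_le.mp (hlip s)).1
        have hs' : |s| = s := abs_of_pos hs
        linarith [hs', (abs_le.mp (hlip s)).2]
    have := hmono (Set.self_mem_Ici) ht ht
    simpa [hg0] using this
  · have hanti : AntitoneOn g (Set.Iic 0) := by
      apply antitoneOn_of_deriv_nonpos (convex_Iic 0) hcont.continuousOn
      · exact fun s _ => (hderiv s).differentiableAt.differentiableWithinAt
      · intro s hs
        rw [interior_Iic] at hs
        rw [hdg]
        have hs' : |s| = -s := abs_of_neg hs
        have := (abs_le.mp (hlip s)).1
        linarith
    have := hanti ht.le (Set.self_mem_Iic) ht.le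
    simpa [hg0] using this

/-- Concave second-order lower bound of `h` around the local point `xⁱ`:
`h(x) ≥ h(xⁱ) + h'(xⁱ)·(x − xⁱ) − (ε/2)·(x − xⁱ)²`. -/
theorem h_second_order_lower_bound
    (L : ℕ) (hL : 1 ≤ L) (lam Pt : ℝ) (hlam : 0 < lam) (hPt : 0 < Pt)
    (ϑ : Fin L → ℝ) (Y : Fin L → Fin L → ℂ) (X : ℝ)
    (h h' : ℝ → ℝ)
    (hh : ∀ x, h x = Pt * X + ∑ a : Fin L, ∑ b ∈ Finset.univ.filter (fun b => a < b),
      2 * Pt * ‖Y a b‖ *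
        Real.cos (2 * π / lam * x * (ϑ b - ϑ a) + Complex.arg (Y a b)))
    (hh' : ∀ x, h' x = ∑ a : Fin L, ∑ b ∈ Finset.univ.filter (fun b => a < b),
      -(4 * π * Pt * ‖Y a b‖ * (ϑ b - ϑ a)) / lam *
        Real.sin (2 * π / lam * x * (ϑ b - ϑ a) + Complex.arg (Y a b)))
    (ε : ℝ)
    (hε : ε = ∑ a : Fin L, ∑ b ∈ Finset.univ.filter (fun b => a < b),
      8 * π ^ 2 * Pt * ‖Y a b‖ * (ϑ b - ϑ a) ^ 2 / lam ^ 2)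
    (x xi : ℝ) :
    h x ≥ h xi + h' xi * (x - xi) - ε / 2 * (x - xi) ^ 2 := by
  rw [ge_iff_le, hh x, hh xi, hh' xi, hε]
  have hlam' : lam ≠ 0 := hlam.ne'
  have key : (∑ a : Fin L, ∑ b ∈ Finset.univ.filter (fun b => a < b),
      (2 * Pt * ‖Y a b‖ *
        Real.cos (2 * π / lam * xi * (ϑ b - ϑ a) + Complex.arg (Y a b))
      + -(4 * π * Pt * ‖Y a b‖ * (ϑ b - ϑ a)) / lam *
        Real.sin (2 * π / lam * xi * (ϑ b - ϑ a) + Complex.arg (Y a b)) * (x - xi)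
      - 8 * π ^ 2 * Pt * ‖Y a b‖ * (ϑ b - ϑ a) ^ 2 / lam ^ 2 / 2 * (x - xi) ^ 2))
      ≤ ∑ a : Fin L, ∑ b ∈ Finset.univ.filter (fun b => a < b),
      2 * Pt * ‖Y a b‖ *
        Real.cos (2 * π / lam * x * (ϑ b - ϑ a) + Complex.arg (Y a b)) := by
    apply Finset.sum_le_sum
    intro a _
    apply Finset.sum_le_sum
    intro b _
    set A := 2 * Pt * ‖Y a b‖ with hA
    set z := 2 * π / lam * xi * (ϑ b - ϑ a) + Complex.arg (Y a b) with hz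
    set t := 2 * π / lam * (ϑ b - ϑ a) * (x - xi) with ht
    have hzt : 2 * π / lam * x * (ϑ b - ϑ a) + Complex.arg (Y a b) = z + t := by
      rw [hz, ht]; ring
    have hA0 : 0 ≤ A := by positivity
    have hk := mul_le_mul_of_nonneg_left (cos_taylor_lb z t) hA0
    rw [hzt]
    have heq : A * Real.cos z
        + -(4 * π * Pt * ‖Y a b‖ * (ϑ b - ϑ a)) / lam * Real.sin z * (x - xi)
        - 8 * π ^ 2 * Pt * ‖Y a b‖ * (ϑ b - ϑ a) ^ 2 / lam ^ 2 / 2 * (x - xi) ^ 2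
        = A * (Real.cos z - Real.sin z * t - t ^ 2 / 2) := by
      rw [hA, ht]; field_simp; ring
    linarith [heq ▸ hk]
  calc Pt * X + (∑ a : Fin L, ∑ b ∈ Finset.univ.filter (fun b => a < b),
        2 * Pt * ‖Y a b‖ *
          Real.cos (2 * π / lam * xi * (ϑ b - ϑ a) + Complex.arg (Y a b)))
      + (∑ a : Fin L, ∑ b ∈ Finset.univ.filter (fun b => a < b),
        -(4 * π * Pt * ‖Y a b‖ * (ϑ b - ϑ a)) / lam *
          Real.sin (2 * π / lam * xi * (ϑ b - ϑ a) + Complex.arg (Y a b))) * (x - xi)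
      - (∑ a : Fin L, ∑ b ∈ Finset.univ.filter (fun b => a < b),
        8 * π ^ 2 * Pt * ‖Y a b‖ * (ϑ b - ϑ a) ^ 2 / lam ^ 2) / 2 * (x - xi) ^ 2
      = Pt * X + ∑ a : Fin L, ∑ b ∈ Finset.univ.filter (fun b => a < b),
        (2 * Pt * ‖Y a b‖ *
          Real.cos (2 * π / lam * xi * (ϑ b - ϑ a) + Complex.arg (Y a b))
        + -(4 * π * Pt * ‖Y a b‖ * (ϑ b - ϑ a)) / lam *
          Real.sin (2 * π / lam * xi * (ϑ b - ϑ a) + Complex.arg (Y a b)) * (x - xi)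
        - 8 * π ^ 2 * Pt * ‖Y a b‖ * (ϑ b - ϑ a) ^ 2 / lam ^ 2 / 2 * (x - xi) ^ 2) := by
        simp only [Finset.sum_add_distrib, Finset.sum_sub_distrib, Finset.sum_mul,
          Finset.sum_div]
        ring
    _ ≤ _ := by linarith [key]
end

section
/- For every real x and every local point xⁱ, the function h admits the convex second-order upper bound h(x) ≤ h(xⁱ) + h′(xⁱ)·(x − xⁱ) + (ε/2)·(x − xⁱ)², where h′(xⁱ) = Σ_{a=1}^{L−1} Σ_{b=a+1}^{L} (−(4π·P_t·|Y_{ab}|·ϑ_{ab})/λ)·sin((2π/λ)·xⁱ·ϑ_{ab} + arg Y_{ab}) and ε = Σ_{a=1}^{L−1} Σ_{b=a+1}^{L} (8π²·P_t·|Y_{ab}|·ϑ_{ab}²)/λ². -/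
open Real Complex Finset


lemma sin_lip (a b : ℝ) : |Real.sin a - Real.sin b| ≤ |a - b| := by
  rw [Real.sin_sub_sin]
  calc |2 * Real.sin ((a - b) / 2) * Real.cos ((a + b) / 2)|
      = 2 * |Real.sin ((a - b) / 2)| * |Real.cos ((a + b) / 2)| := by
        rw [abs_mul, abs_mul]; simp [abs_of_nonneg]
    _ ≤ 2 * |(a - b) / 2| * 1 := by
        apply mul_le_mul _ (Real.abs_cos_le_one _) (abs_nonneg _) (by positivity)
        exact mul_le_mul_of_nonneg_left Real.abs_sin_le_abs (by norm_num)
    _ = |a - b| := by rw [abs_div]; simp [abs_of_nonneg]; ring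

lemma cos_taylor (s t : ℝ) :
    Real.cos t ≤ Real.cos s - Real.sin s * (t - s) + (t - s) ^ 2 / 2 := by
  have hg : ∀ u : ℝ, HasDerivAt
      (fun u : ℝ => Real.cos s - Real.sin s * (u - s) + (u - s) ^ 2 / 2 - Real.cos u)
      ((u - s) + (Real.sin u - Real.sin s)) u := by
    intro u
    have h1 : HasDerivAt (fun u : ℝ => u - s) 1 u :=
      (hasDerivAt_id u).sub_const s
    have h2 : HasDerivAt (fun u : ℝ => Real.cos s - Real.sin s * (u - s) + (u - s) ^ 2 / 2 - Real.cos u)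
        (0 - Real.sin s * 1 + (2 * (u - s) ^ 1 * 1) / 2 - (-Real.sin u)) u :=
      (((hasDerivAt_const u (Real.cos s)).sub ((h1.const_mul (Real.sin s)))).add
        ((h1.pow 2).div_const 2)).sub (Real.hasDerivAt_cos u)
    convert h2 using 1; ring
  set g : ℝ → ℝ := fun u => Real.cos s - Real.sin s * (u - s) + (u - s) ^ 2 / 2 - Real.cos u with hgdef
  have hgs : g s = 0 := by simp [hgdef]
  have hgoal : 0 ≤ g t := by
    rcases le_total s t with hst | hst
    · have hmono : MonotoneOn g (Set.Icc s t) := by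
        apply monotoneOn_of_deriv_nonneg (convex_Icc s t)
        · exact fun u _ => ((hg u).continuousAt.continuousWithinAt)
        · exact fun u _ => ((hg u).differentiableAt.differentiableWithinAt)
        · intro u hu
          rw [(hg u).deriv]
          rw [interior_Icc] at hu
          have h1 := (abs_le.1 (sin_lip u s)).1
          have h2 : |u - s| = u - s := abs_of_nonneg (by linarith [hu.1])
          linarith [h2 ▸ h1]
      have := hmono (Set.left_mem_Icc.2 hst) (Set.right_mem_Icc.2 hst) hst
      simpa [hgs] using this
    · have hmono : AntitoneOn g (Set.Icc t s) := by
        apply antitoneOn_of_deriv_nonpos (convex_Icc t s)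
        · exact fun u _ => ((hg u).continuousAt.continuousWithinAt)
        · exact fun u _ => ((hg u).differentiableAt.differentiableWithinAt)
        · intro u hu
          rw [(hg u).deriv]
          rw [interior_Icc] at hu
          have h1 := (abs_le.1 (sin_lip u s)).2
          have h2 : |u - s| = -(u - s) := abs_of_nonpos (by linarith [hu.2])
          linarith [h2 ▸ h1]
      have := hmono (Set.left_mem_Icc.2 hst) (Set.right_mem_Icc.2 hst) hst
      simpa [hgs] using this
  have := sub_nonneg.1 hgoal
  simpa [hgdef] using hgoal

/-- Convex second-order upper bound of `h` around the local point `xⁱ`: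
`h(x) ≤ h(xⁱ) + h'(xⁱ)·(x − xⁱ) + (ε/2)·(x − xⁱ)²`. -/
theorem h_second_order_upper_bound
    (L : ℕ) (hL : 1 ≤ L) (lam Pt : ℝ) (hlam : 0 < lam) (hPt : 0 < Pt)
    (ϑ : Fin L → ℝ) (Y : Fin L → Fin L → ℂ) (X : ℝ)
    (h h' : ℝ → ℝ)
    (hh : ∀ x, h x = Pt * X + ∑ a : Fin L, ∑ b ∈ Finset.univ.filter (fun b => a < b),
      2 * Pt * ‖Y a b‖ *
        Real.cos (2 * π / lam * x * (ϑ b - ϑ a) + Complex.arg (Y a b)))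
    (hh' : ∀ x, h' x = ∑ a : Fin L, ∑ b ∈ Finset.univ.filter (fun b => a < b),
      -(4 * π * Pt * ‖Y a b‖ * (ϑ b - ϑ a)) / lam *
        Real.sin (2 * π / lam * x * (ϑ b - ϑ a) + Complex.arg (Y a b)))
    (ε : ℝ)
    (hε : ε = ∑ a : Fin L, ∑ b ∈ Finset.univ.filter (fun b => a < b),
      8 * π ^ 2 * Pt * ‖Y a b‖ * (ϑ b - ϑ a) ^ 2 / lam ^ 2)
    (x xi : ℝ) :
    h x ≤ h xi + h' xi * (x - xi) + ε / 2 * (x - xi) ^ 2 := by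
  have hlam' : lam ≠ 0 := ne_of_gt hlam
  have key : ∀ a b : Fin L,
      2 * Pt * ‖Y a b‖ *
        Real.cos (2 * π / lam * x * (ϑ b - ϑ a) + Complex.arg (Y a b))
      ≤ 2 * Pt * ‖Y a b‖ *
          Real.cos (2 * π / lam * xi * (ϑ b - ϑ a) + Complex.arg (Y a b))
        + -(4 * π * Pt * ‖Y a b‖ * (ϑ b - ϑ a)) / lam *
            Real.sin (2 * π / lam * xi * (ϑ b - ϑ a) + Complex.arg (Y a b)) * (x - xi)
        + 8 * π ^ 2 * Pt * ‖Y a b‖ * (ϑ b - ϑ a) ^ 2 / lam ^ 2 / 2 * (x - xi) ^ 2 := by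
    intro a b
    have hA : (0:ℝ) ≤ 2 * Pt * ‖Y a b‖ := by positivity
    have h0 := cos_taylor (2 * π / lam * xi * (ϑ b - ϑ a) + Complex.arg (Y a b))
      (2 * π / lam * x * (ϑ b - ϑ a) + Complex.arg (Y a b))
    have h1 := mul_le_mul_of_nonneg_left h0 hA
    calc 2 * Pt * ‖Y a b‖ *
        Real.cos (2 * π / lam * x * (ϑ b - ϑ a) + Complex.arg (Y a b))
        ≤ 2 * Pt * ‖Y a b‖ *
          (Real.cos (2 * π / lam * xi * (ϑ b - ϑ a) + Complex.arg (Y a b))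
           - Real.sin (2 * π / lam * xi * (ϑ b - ϑ a) + Complex.arg (Y a b)) *
             ((2 * π / lam * x * (ϑ b - ϑ a) + Complex.arg (Y a b))
              - (2 * π / lam * xi * (ϑ b - ϑ a) + Complex.arg (Y a b)))
           + ((2 * π / lam * x * (ϑ b - ϑ a) + Complex.arg (Y a b))
              - (2 * π / lam * xi * (ϑ b - ϑ a) + Complex.arg (Y a b))) ^ 2 / 2) := h1
      _ = _ := by field_simp; ring
  rw [hh x, hh xi, hh' xi, hε]
  have hsum := Finset.sum_le_sum (fun a (_ : a ∈ (Finset.univ : Finset (Fin L))) =>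
    Finset.sum_le_sum (fun b (_ : b ∈ Finset.univ.filter (fun b => a < b)) => key a b))
  have expand : ∑ a : Fin L, ∑ b ∈ Finset.univ.filter (fun b => a < b),
      (2 * Pt * ‖Y a b‖ *
          Real.cos (2 * π / lam * xi * (ϑ b - ϑ a) + Complex.arg (Y a b))
        + -(4 * π * Pt * ‖Y a b‖ * (ϑ b - ϑ a)) / lam *
            Real.sin (2 * π / lam * xi * (ϑ b - ϑ a) + Complex.arg (Y a b)) * (x - xi)
        + 8 * π ^ 2 * Pt * ‖Y a b‖ * (ϑ b - ϑ a) ^ 2 / lam ^ 2 / 2 * (x - xi) ^ 2)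
      = (∑ a : Fin L, ∑ b ∈ Finset.univ.filter (fun b => a < b),
          2 * Pt * ‖Y a b‖ *
            Real.cos (2 * π / lam * xi * (ϑ b - ϑ a) + Complex.arg (Y a b)))
        + (∑ a : Fin L, ∑ b ∈ Finset.univ.filter (fun b => a < b),
            -(4 * π * Pt * ‖Y a b‖ * (ϑ b - ϑ a)) / lam *
              Real.sin (2 * π / lam * xi * (ϑ b - ϑ a) + Complex.arg (Y a b))) * (x - xi)
        + (∑ a : Fin L, ∑ b ∈ Finset.univ.filter (fun b => a < b),
            8 * π ^ 2 * Pt * ‖Y a b‖ * (ϑ b - ϑ a) ^ 2 / lam ^ 2) / 2 * (x - xi) ^ 2 := by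
    simp only [Finset.sum_add_distrib, Finset.sum_mul, Finset.sum_div]
  rw [expand] at hsum
  linarith
end
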